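/- Assume t(d) > 0 for d ≡ 0 (mod 4), t(d) < 0 for d ≡ 3 (mod 4) (d positive), t(d) = 0 for d ≡ 1, 2 (mod 4), t(0)=2, t(−1)=−1, t(d)=0 for d < −1, and the Zagier identity ∑_{|r|<2√n} t(4n−r²) ∈ {−4, 2, 0} according as n is a square, 4n+1 is a square, or neither, together with the bounds exp(π√d) − (1/2)(2πd)^{3/2}exp((π/3)√d) ≤ t(d) for d ≡ 0 (mod 4) and |t(d) + exp(π√d)| ≤ (1/2)(2πd)^{3/2}exp((π/3)√d) for d ≡ 3 (mod 4). Then for every integer k ≥ 3, the quantity ∑_{r∈ℤ} t(4k − r²) + ∑_{r ≥ 1, r odd} t(16k − r²) + 24 ∑_{d|k, d odd} d is negative. -/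

import Mathlib

open Real in
private lemma case_I_aux1 (x : ℝ) (hx0 : 0 ≤ x) (h47 : 47 ≤ x^2) :
    (2 * π * x^2) ^ ((3:ℝ)/2) ≤ Real.exp (2*π/3 * x) := by
  have hπ3 : (3:ℝ) ≤ π := Real.pi_gt_three.le
  have hπ4 : π ≤ 4 := Real.pi_le_four
  have hb : (0:ℝ) ≤ 2 * π * x^2 := by positivity
  have h1 : (2 * π * x^2) ^ ((3:ℝ)/2) = (Real.sqrt (2*π) * x)^(3:ℕ) := by
    rw [show ((3:ℝ)/2) = (1/2)*(3:ℕ) by norm_num, Real.rpow_mul hb, Real.rpow_natCast,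
      ← Real.sqrt_eq_rpow, Real.sqrt_mul (by positivity), Real.sqrt_sq hx0]
  rw [h1]
  have hs : Real.sqrt (2*π) ≤ 3 := by
    have h9 : Real.sqrt (2*π) ≤ Real.sqrt 9 := Real.sqrt_le_sqrt (by linarith)
    simpa [show (9:ℝ) = 3^2 by norm_num, Real.sqrt_sq] using h9
  have hs0 : (0:ℝ) ≤ Real.sqrt (2*π) := Real.sqrt_nonneg _
  have h2 : (Real.sqrt (2*π) * x)^(3:ℕ) ≤ 27 * x^3 := by
    rw [mul_pow]
    have hsq : Real.sqrt (2*π)^2 ≤ 9 := by nlinarith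
    have : Real.sqrt (2*π)^3 ≤ 27 := by nlinarith
    nlinarith [pow_nonneg hx0 3]
  have h3 : (2*x)^7 / (Nat.factorial 7 : ℝ) ≤ Real.exp (2*x) :=
    Real.pow_div_factorial_le_exp _ (by linarith) 7
  have h4 : 27 * x^3 ≤ (2*x)^7 / (Nat.factorial 7 : ℝ) := by
    rw [show ((Nat.factorial 7 : ℕ) : ℝ) = 5040 by norm_num [Nat.factorial]]
    have hx4 : 2209 ≤ x^4 := by nlinarith
    nlinarith [pow_nonneg hx0 3, mul_le_mul_of_nonneg_left hx4 (pow_nonneg hx0 3)]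
  have h5 : Real.exp (2*x) ≤ Real.exp (2*π/3*x) := by
    apply Real.exp_le_exp.2; nlinarith
  linarith

open Real in
private lemma case_I_aux2 (x kR : ℝ) (hk : 3 ≤ kR) (hx0 : 0 ≤ x) (hx2 : x^2 = 16*kR - 1) :
    48 * kR^2 < Real.exp (π * x) := by
  have hπ3 : (3:ℝ) ≤ π := Real.pi_gt_three.le
  have h3 : (3*x)^4 / (Nat.factorial 4 : ℝ) ≤ Real.exp (3*x) :=
    Real.pow_div_factorial_le_exp _ (by linarith) 4
  have h5 : Real.exp (3*x) ≤ Real.exp (π*x) := by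
    apply Real.exp_le_exp.2; nlinarith
  have hD : 15*kR ≤ x^2 := by nlinarith
  have hx4 : (15*kR)^2 ≤ x^4 := by nlinarith
  rw [show ((Nat.factorial 4 : ℕ) : ℝ) = 24 by norm_num [Nat.factorial]] at h3
  nlinarith

open Real in
open scoped Classical in
/-- Case I of the proof: under the known properties of the traces of singular moduli `t`,
for every `k ≥ 3` the quantity
`∑_{r∈ℤ} t(4k − r²) + ∑_{r ≥ 1 odd} t(16k − r²) + 24 ∑_{d∣k, d odd} d` is negative. -/
theorem case_I_negative (t : ℤ → ℝ)
    (hpos : ∀ d : ℤ, 0 < d → d % 4 = 0 → 0 < t d)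
    (hneg3 : ∀ d : ℤ, 0 < d → d % 4 = 3 → t d < 0)
    (hvan : ∀ d : ℤ, d % 4 = 1 ∨ d % 4 = 2 → t d = 0)
    (hzero : t 0 = 2) (hmone : t (-1) = -1)
    (hlow : ∀ d : ℤ, d < -1 → t d = 0)
    (hZagier : ∀ n : ℕ, 0 < n →
      (∑ᶠ (r : ℤ) (_ : r ^ 2 < 4 * (n : ℤ)), t (4 * n - r ^ 2)) =
        if IsSquare (n : ℤ) then -4
        else if IsSquare (4 * (n : ℤ) + 1) then 2
        else 0)
    (hbd0 : ∀ d : ℤ, 0 < d → d % 4 = 0 →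
      Real.exp (π * Real.sqrt d) -
          (1 / 2) * (2 * π * d) ^ ((3 : ℝ) / 2) * Real.exp (π / 3 * Real.sqrt d) ≤ t d)
    (hbd3 : ∀ d : ℤ, 0 < d → d % 4 = 3 →
      |t d + Real.exp (π * Real.sqrt d)| ≤
        (1 / 2) * (2 * π * d) ^ ((3 : ℝ) / 2) * Real.exp (π / 3 * Real.sqrt d))
    (k : ℕ) (hk : 3 ≤ k) :
    (∑ᶠ r : ℤ, t (4 * k - r ^ 2)) +
        (∑ᶠ (r : ℤ) (_ : 1 ≤ r ∧ Odd r), t (16 * k - r ^ 2)) +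
        24 * ∑ d ∈ k.divisors.filter (fun d => Odd d), (d : ℝ) < 0 := by
  have hK : (3:ℤ) ≤ (k:ℤ) := by exact_mod_cast hk
  set K : ℤ := (k:ℤ) with hKdef
  -- ==================== Part 1 : first finsum ≤ 0 ====================
  have hS1 : (∑ᶠ r : ℤ, t (4 * K - r ^ 2)) ≤ 0 := by
    set s : Finset ℤ := Finset.Icc (-(4*K+1)) (4*K+1) with hs
    have hmem : ∀ r : ℤ, r^2 ≤ 4*K+1 → r ∈ s := by
      intro r hr
      simp only [hs, Finset.mem_Icc]
      constructor <;> nlinarith [sq_nonneg (r-1), sq_nonneg (r+1)]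
    have hsupf : Function.support (fun r : ℤ => t (4 * K - r ^ 2)) ⊆ (s : Set ℤ) := by
      intro r hr
      simp only [Function.mem_support] at hr
      have h1 : -1 ≤ 4*K - r^2 := by
        by_contra h
        exact hr (hlow _ (by omega))
      exact hmem r (by omega)
    have hsum1 : (∑ᶠ r : ℤ, t (4 * K - r ^ 2)) = ∑ r ∈ s, t (4 * K - r ^ 2) :=
      finsum_eq_finset_sum_of_support_subset _ hsupf
    have hZ := hZagier k (by omega)
    have hZ' : (∑ᶠ (r : ℤ) (_ : r ^ 2 < 4 * K), t (4 * K - r ^ 2)) =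
        ∑ r ∈ s, (if r ^ 2 < 4 * K then t (4 * K - r ^ 2) else 0) := by
      have e1 : ∀ r : ℤ, (∑ᶠ (_ : r ^ 2 < 4 * K), t (4 * K - r ^ 2)) =
          (if r ^ 2 < 4 * K then t (4 * K - r ^ 2) else 0) := fun r => finsum_eq_if
      rw [finsum_congr e1]
      apply finsum_eq_finset_sum_of_support_subset
      intro r hr
      simp only [Function.mem_support] at hr
      have h2 : r^2 ≤ 4*K+1 := by
        by_contra h
        exact hr (if_neg (by omega))
      exact hmem r h2
    have hpt : ∀ r : ℤ, t (4 * K - r ^ 2) =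
        (if r ^ 2 < 4 * K then t (4 * K - r ^ 2) else 0) +
        (if r ^ 2 = 4 * K then (2:ℝ) else 0) +
        (if r ^ 2 = 4 * K + 1 then (-1:ℝ) else 0) := by
      intro r
      rcases lt_or_ge (r^2) (4*K) with h | h
      · rw [if_pos h, if_neg (by omega), if_neg (by omega)]; ring
      · rcases eq_or_lt_of_le h with h1 | h1
        · rw [if_neg (by omega), if_pos h1.symm, if_neg (by omega),
            show 4*K - r^2 = 0 by omega, hzero]; ring
        · rcases eq_or_lt_of_le (by omega : 4*K+1 ≤ r^2) with h2 | h2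
          · rw [if_neg (by omega), if_neg (by omega), if_pos h2.symm,
              show 4*K - r^2 = -1 by omega, hmone]; ring
          · rw [if_neg (by omega), if_neg (by omega), if_neg (by omega),
              hlow _ (by omega)]; ring
    have hsplit : ∑ r ∈ s, t (4 * K - r ^ 2) =
        (∑ r ∈ s, (if r ^ 2 < 4 * K then t (4 * K - r ^ 2) else 0)) +
        (∑ r ∈ s, (if r ^ 2 = 4 * K then (2:ℝ) else 0)) +
        (∑ r ∈ s, (if r ^ 2 = 4 * K + 1 then (-1:ℝ) else 0)) := by
      rw [← Finset.sum_add_distrib, ← Finset.sum_add_distrib]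
      exact Finset.sum_congr rfl fun r _ => hpt r
    set A : Finset ℤ := s.filter (fun r => r ^ 2 = 4 * K) with hA
    set B : Finset ℤ := s.filter (fun r => r ^ 2 = 4 * K + 1) with hB
    have hsumA : (∑ r ∈ s, (if r ^ 2 = 4 * K then (2:ℝ) else 0)) = (A.card : ℝ) * 2 := by
      rw [hA, ← Finset.sum_filter, Finset.sum_const, nsmul_eq_mul]
    have hsumB : (∑ r ∈ s, (if r ^ 2 = 4 * K + 1 then (-1:ℝ) else 0)) = (B.card : ℝ) * (-1) := by
      rw [hB, ← Finset.sum_filter, Finset.sum_const, nsmul_eq_mul]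
    rw [hsum1, hsplit, ← hZ', hZ, hsumA, hsumB]
    by_cases hsqK : IsSquare K
    · rw [if_pos hsqK]
      obtain ⟨m, hm⟩ := hsqK
      have hAsub : A ⊆ ({2*m, -(2*m)} : Finset ℤ) := by
        intro r hr
        rw [hA, Finset.mem_filter] at hr
        have h1 : r^2 = (2*m)^2 := by rw [hr.2, hm]; ring
        have h2 : |r| = |2*m| := (sq_eq_sq_iff_abs_eq_abs r (2*m)).mp h1
        have h3 : r = 2*m ∨ r = -(2*m) := abs_eq_abs.mp h2
        simpa [Finset.mem_insert, Finset.mem_singleton] using h3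
      have hcardA : (A.card : ℝ) ≤ 2 := by
        have h1 := Finset.card_le_card hAsub
        have h2 : ({2*m, -(2*m)} : Finset ℤ).card ≤ 2 :=
          (Finset.card_insert_le _ _).trans (by simp)
        exact_mod_cast le_trans h1 h2
      have hcardB : (0:ℝ) ≤ (B.card : ℝ) := Nat.cast_nonneg _
      linarith
    · rw [if_neg hsqK]
      have hcardA : A = ∅ := by
        rw [hA, Finset.filter_eq_empty_iff]
        intro r _ hr2
        have hev : Even (r^2) := ⟨2*K, by omega⟩
        have : Even r := (Int.even_pow.mp hev).1
        obtain ⟨u, hu⟩ := this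
        have h4 : 4*(u*u) = 4*K := by rw [← hr2, hu]; ring
        exact hsqK ⟨u, by omega⟩
      by_cases hsq4 : IsSquare (4*K+1)
      · rw [if_pos hsq4]
        obtain ⟨q, hq⟩ := hsq4
        have hq0 : q ≠ 0 := by
          intro h; rw [h] at hq; norm_num at hq; omega
        have hqmem : ∀ r : ℤ, r^2 = 4*K+1 → r ∈ B := by
          intro r hr
          rw [hB, Finset.mem_filter]
          exact ⟨hmem r (by omega), hr⟩
        have hq2 : q^2 = 4*K+1 := by rw [sq]; omega
        have hq2' : (-q)^2 = 4*K+1 := by rw [neg_sq]; exact hq2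
        have hsubB : ({q, -q} : Finset ℤ) ⊆ B := by
          intro r hr
          simp only [Finset.mem_insert, Finset.mem_singleton] at hr
          rcases hr with h | h
          · subst h; exact hqmem _ hq2
          · subst h; exact hqmem _ hq2'
        have hcardB : (2:ℝ) ≤ (B.card : ℝ) := by
          have h2 : ({q, -q} : Finset ℤ).card = 2 := Finset.card_pair (by omega)
          have h1 := Finset.card_le_card hsubB
          rw [h2] at h1
          exact_mod_cast h1
        rw [hcardA]
        simp only [Finset.card_empty, Nat.cast_zero]
        linarith
      · rw [if_neg hsq4, hcardA]
        have hcardB : (0:ℝ) ≤ (B.card : ℝ) := Nat.cast_nonneg _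
        simp only [Finset.card_empty, Nat.cast_zero]
        linarith
  -- ==================== Part 2 : second finsum ≤ t (16K - 1) ====================
  have hg_nonpos : ∀ r : ℤ, (if 1 ≤ r ∧ Odd r then t (16 * K - r ^ 2) else 0) ≤ 0 := by
    intro r
    by_cases hc : 1 ≤ r ∧ Odd r
    · rw [if_pos hc]
      obtain ⟨j, hj⟩ := hc.2
      have hr2 : r^2 = 4*(j*j+j)+1 := by rw [hj]; ring
      have hd4 : (16*K - r^2) % 4 = 3 := by omega
      rcases lt_trichotomy 0 (16*K - r^2) with h | h | h
      · exact (hneg3 _ h hd4).le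
      · omega
      · have h1 : 16*K - r^2 = -1 ∨ 16*K - r^2 < -1 := by omega
        rcases h1 with h1 | h1
        · rw [h1, hmone]; norm_num
        · rw [hlow _ h1]
    · rw [if_neg hc]
  have hS2 : (∑ᶠ (r : ℤ) (_ : 1 ≤ r ∧ Odd r), t (16 * K - r ^ 2)) ≤ t (16 * K - 1) := by
    set M : ℤ := 16*K+1 with hM
    set s2 : Finset ℤ := Finset.Icc 1 M with hs2
    have e1 : ∀ r : ℤ, (∑ᶠ (_ : 1 ≤ r ∧ Odd r), t (16 * K - r ^ 2)) =
        (if 1 ≤ r ∧ Odd r then t (16 * K - r ^ 2) else 0) := fun r => finsum_eq_if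
    rw [finsum_congr e1]
    have hsup : Function.support (fun r : ℤ => if 1 ≤ r ∧ Odd r then t (16 * K - r ^ 2) else 0)
        ⊆ (s2 : Set ℤ) := by
      intro r hr
      simp only [Function.mem_support] at hr
      by_cases hc : 1 ≤ r ∧ Odd r
      · rw [if_pos hc] at hr
        have h1 : -1 ≤ 16*K - r^2 := by
          by_contra h
          exact hr (hlow _ (by omega))
        have h2 : r^2 ≤ 16*K+1 := by omega
        simp only [hs2, hM, Finset.coe_Icc, Set.mem_Icc]
        refine ⟨hc.1, ?_⟩
        nlinarith [hc.1]
      · exact absurd (if_neg hc) hr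
    rw [finsum_eq_finset_sum_of_support_subset _ hsup]
    have h1mem : (1:ℤ) ∈ s2 := by
      simp only [hs2, hM, Finset.mem_Icc]
      omega
    rw [← Finset.add_sum_erase _ _ h1mem]
    have hone : (if 1 ≤ (1:ℤ) ∧ Odd (1:ℤ) then t (16 * K - (1:ℤ) ^ 2) else 0)
        = t (16*K - 1) := by
      rw [if_pos ⟨le_refl 1, odd_one⟩]; norm_num
    rw [hone]
    have hrest : (∑ r ∈ s2.erase 1, (if 1 ≤ r ∧ Odd r then t (16 * K - r ^ 2) else 0)) ≤ 0 :=
      Finset.sum_nonpos fun r _ => hg_nonpos r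
    linarith
  -- ==================== Part 3 : divisor sum ≤ k^2 ====================
  have hσ : (∑ d ∈ k.divisors.filter (fun d => Odd d), (d : ℝ)) ≤ (k:ℝ)^2 := by
    have h1 : k.divisors.filter (fun d => Odd d) ⊆ Finset.range (k+1) := by
      intro d hd
      rw [Finset.mem_filter, Nat.mem_divisors] at hd
      exact Finset.mem_range.2 (Nat.lt_succ_of_le (Nat.le_of_dvd (by omega) hd.1.1))
    have h2 : (∑ d ∈ k.divisors.filter (fun d => Odd d), d) ≤ ∑ d ∈ Finset.range (k+1), d :=
      Finset.sum_le_sum_of_subset h1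
    have h3 : (∑ d ∈ Finset.range (k+1), d) ≤ k*k := by
      have hg : (∑ d ∈ Finset.range (k+1), d) * 2 = (k+1)*k := by
        simpa using Finset.sum_range_id_mul_two (k+1)
      have h4 : (k+1)*k = k*k + k := by ring
      have h5 : k ≤ k*k := Nat.le_mul_of_pos_left k (by omega)
      omega
    have h5 : (∑ d ∈ k.divisors.filter (fun d => Odd d), d) ≤ k*k := le_trans h2 h3
    calc (∑ d ∈ k.divisors.filter (fun d => Odd d), (d : ℝ))
        = ((∑ d ∈ k.divisors.filter (fun d => Odd d), d : ℕ) : ℝ) := by push_cast; ring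
      _ ≤ ((k*k : ℕ) : ℝ) := by exact_mod_cast h5
      _ = (k:ℝ)^2 := by push_cast; ring
  -- ==================== Part 4 : analytic bound ====================
  have hfinal : t (16 * K - 1) + 24 * (k:ℝ)^2 < 0 := by
    have hd0 : (0:ℤ) < 16*K - 1 := by omega
    have hd4 : (16*K - 1) % 4 = 3 := by omega
    have hb := hbd3 (16*K - 1) hd0 hd4
    have hkR : (3:ℝ) ≤ (k:ℝ) := by exact_mod_cast hk
    have hDval : ((16*K - 1 : ℤ) : ℝ) = 16*(k:ℝ) - 1 := by
      rw [hKdef]; push_cast; ring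
    set x : ℝ := Real.sqrt ((16*K - 1 : ℤ) : ℝ) with hx
    have hx0 : 0 ≤ x := Real.sqrt_nonneg _
    have hx2 : x^2 = ((16*K - 1 : ℤ) : ℝ) := Real.sq_sqrt (by rw [hDval]; linarith)
    have hx2' : x^2 = 16*(k:ℝ) - 1 := by rw [hx2, hDval]
    have h47 : (47:ℝ) ≤ x^2 := by rw [hx2']; linarith
    have hB1 : (2 * π * ((16*K - 1 : ℤ) : ℝ)) ^ ((3:ℝ)/2) ≤ Real.exp (2*π/3 * x) := by
      rw [← hx2]
      exact case_I_aux1 x hx0 h47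
    have hC : 48 * (k:ℝ)^2 < Real.exp (π * x) := case_I_aux2 x (k:ℝ) hkR hx0 hx2'
    have ht : t (16*K - 1) + Real.exp (π * x) ≤
        (1/2) * (2 * π * ((16*K - 1 : ℤ) : ℝ)) ^ ((3:ℝ)/2) * Real.exp (π/3 * x) :=
      (abs_le.mp hb).2
    have hEexp : Real.exp (2*π/3 * x) * Real.exp (π/3 * x) = Real.exp (π * x) := by
      rw [← Real.exp_add]; congr 1; ring
    have hexp_pos : (0:ℝ) < Real.exp (π/3 * x) := Real.exp_pos _
    have hB2 : (1/2) * (2 * π * ((16*K - 1 : ℤ) : ℝ)) ^ ((3:ℝ)/2) * Real.exp (π/3 * x)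
        ≤ Real.exp (π * x) / 2 := by
      have h6 := mul_le_mul_of_nonneg_right hB1 hexp_pos.le
      rw [hEexp] at h6
      linarith
    linarith
  linarith
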